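/- Let B be the open unit ball in ℝⁿ, x a point of its boundary, and V an open set containing x. Then x is locally connectedly accessible from A = V ∩ B. -/
import Mathlib

/-- `x` is locally connectedly accessible from `A`. -/
def LocConnAccess {X : Type*} [TopologicalSpace X] (A : Set X) (x : X) : Prop :=
  ∀ U : Set X, IsOpen U → x ∈ U → ∃ G : Set X, IsOpen G ∧ x ∈ G ∧ G ⊆ U ∧
    ∀ u ∈ G ∩ A, ∀ v ∈ G ∩ A, ∃ E : Set X, IsConnected E ∧ u ∈ E ∧ v ∈ E ∧ E ⊆ U ∩ A

theorem boundary_point_locConnAccess_ball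
    (n : ℕ) (x : EuclideanSpace ℝ (Fin n))
    (hx : x ∈ frontier (Metric.ball (0 : EuclideanSpace ℝ (Fin n)) 1))
    (V : Set (EuclideanSpace ℝ (Fin n))) (hV : IsOpen V) (hxV : x ∈ V) :
    LocConnAccess (V ∩ Metric.ball (0 : EuclideanSpace ℝ (Fin n)) 1) x := by
  intro U hU hxU
  obtain ⟨ε, hε, hball⟩ := Metric.isOpen_iff.mp (hU.inter hV) x ⟨hxU, hxV⟩
  refine ⟨Metric.ball x ε, Metric.isOpen_ball, Metric.mem_ball_self hε,
    fun y hy => (hball hy).1, ?_⟩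
  rintro u ⟨hu1, hu2, hu3⟩ v ⟨hv1, hv2, hv3⟩
  have hseg1 : segment ℝ u v ⊆ Metric.ball x ε :=
    (convex_ball x ε).segment_subset hu1 hv1
  have hseg2 : segment ℝ u v ⊆ Metric.ball (0 : EuclideanSpace ℝ (Fin n)) 1 :=
    (convex_ball 0 1).segment_subset hu3 hv3
  refine ⟨segment ℝ u v, ⟨⟨u, left_mem_segment ℝ u v⟩,
    (convex_segment u v).isPreconnected⟩,
    left_mem_segment ℝ u v, right_mem_segment ℝ u v, ?_⟩
  intro y hy
  exact ⟨(hball (hseg1 hy)).1, (hball (hseg1 hy)).2, hseg2 hy⟩
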